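/- For integers d ≥ 2 and k ≥ 1, the per-last-digit vertex counts of F(d,k) satisfy: n_0^{k+1} = n_0^k + n_{d−1}^k; n_1^{k+1} = n_0^k; and n_j^{k+1} = n_0^k + n_{j−1}^k for every j with 2 ≤ j ≤ d−1. Equivalently, the row vector n^{k+1} = (n_0^{k+1}, …, n_{d−1}^{k+1}) equals n^k · R, where R is the adjacency matrix of T_d. -/
import Mathlib


/-- A vertex of the d-Fibonacci digraph F(d,k): a sequence x : Fin k → ZMod d
such that whenever a digit is nonzero, the next digit is its successor mod d. -/
def fibIsVertex (d k : ℕ) (x : Fin k → ZMod d) : Prop :=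
  ∀ (i : ℕ) (h : i + 1 < k),
    x ⟨i, Nat.lt_of_succ_lt h⟩ ≠ 0 →
      x ⟨i + 1, h⟩ = x ⟨i, Nat.lt_of_succ_lt h⟩ + 1

/-- The arc relation of F(d,k): y is the left shift of x, and if the last digit
of x is nonzero then the last digit of y is its successor mod d. -/
def fibArc (d k : ℕ) (x y : Fin k → ZMod d) : Prop :=
  (∀ (i : ℕ) (h : i + 1 < k), y ⟨i, Nat.lt_of_succ_lt h⟩ = x ⟨i + 1, h⟩) ∧
  (∀ h : 0 < k, x ⟨k - 1, Nat.sub_lt h Nat.one_pos⟩ ≠ 0 →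
    y ⟨k - 1, Nat.sub_lt h Nat.one_pos⟩ = x ⟨k - 1, Nat.sub_lt h Nat.one_pos⟩ + 1)

/-- n_j^k: the number of vertices of F(d,k) whose last digit is j. -/
noncomputable def fibNj (d k : ℕ) (j : ZMod d) : ℕ :=
  Nat.card {x : Fin k → ZMod d // fibIsVertex d k x ∧
    ∀ h : 0 < k, x ⟨k - 1, Nat.sub_lt h Nat.one_pos⟩ = j}

section
variable {d k : ℕ}

lemma snoc_lt (y : Fin k → ZMod d) (j : ZMod d) (i : ℕ) (h : i < k) (h' : i < k + 1) :
    (Fin.snoc y j : Fin (k+1) → ZMod d) ⟨i, h'⟩ = y ⟨i, h⟩ := by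
  have e : (⟨i, h'⟩ : Fin (k+1)) = Fin.castSucc ⟨i, h⟩ := rfl
  rw [e, Fin.snoc_castSucc]

lemma snoc_last' (y : Fin k → ZMod d) (j : ZMod d) (h : k < k+1) :
    (Fin.snoc y j : Fin (k+1) → ZMod d) ⟨k, h⟩ = j := by
  have e : (⟨k, h⟩ : Fin (k+1)) = Fin.last k := rfl
  rw [e, Fin.snoc_last]

lemma vertex_snoc (hk : 0 < k) (y : Fin k → ZMod d) (j : ZMod d) :
    fibIsVertex d (k+1) (Fin.snoc y j) ↔
      fibIsVertex d k y ∧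
        (y ⟨k-1, Nat.sub_lt hk Nat.one_pos⟩ ≠ 0 →
          j = y ⟨k-1, Nat.sub_lt hk Nat.one_pos⟩ + 1) := by
  constructor
  · intro H
    refine ⟨fun i h hne => ?_, fun hne => ?_⟩
    · have h1 : i + 1 < k + 1 := Nat.lt_succ_of_lt h
      have := H i h1
      rw [snoc_lt y j i (Nat.lt_of_succ_lt h), snoc_lt y j (i+1) h] at this
      exact this hne
    · have h1 : (k-1) + 1 < k + 1 := by omega
      have := H (k-1) h1
      rw [snoc_lt y j (k-1) (Nat.sub_lt hk Nat.one_pos)] at this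
      have e : (⟨k-1+1, h1⟩ : Fin (k+1)) = ⟨k, Nat.lt_succ_self k⟩ := by
        ext; simp; omega
      rw [e, snoc_last'] at this
      exact this hne
  · rintro ⟨Hy, Hl⟩ i h hne
    rcases Nat.lt_or_ge (i+1) k with h2 | h2
    · have e1 := snoc_lt y j i (Nat.lt_of_succ_lt h2) (Nat.lt_of_succ_lt h)
      have e2 := snoc_lt y j (i+1) h2 h
      rw [e1] at hne
      rw [e2, e1]
      exact Hy i h2 hne
    · have hik : i + 1 = k := by omega
      have hi : i < k := by omega
      rw [snoc_lt y j i hi] at hne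
      have e : (⟨i+1, h⟩ : Fin (k+1)) = ⟨k, Nat.lt_succ_self k⟩ := by ext; simp [hik]
      rw [e, snoc_last', snoc_lt y j i hi]
      have e2 : (⟨i, hi⟩ : Fin k) = ⟨k-1, Nat.sub_lt hk Nat.one_pos⟩ := by ext; simp; omega
      rw [e2] at hne ⊢
      exact Hl hne

lemma init_isVertex (x : Fin (k+1) → ZMod d) (hx : fibIsVertex d (k+1) x) :
    fibIsVertex d k (Fin.init x) := fun i h hne => hx i (Nat.lt_succ_of_lt h) hne

lemma fibNj_succ (hd : 2 ≤ d) (hk0 : 0 < k) (j : ZMod d) :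
    fibNj d (k+1) j = fibNj d k 0 + (if j - 1 = 0 then 0 else fibNj d k (j-1)) := by
  haveI : NeZero d := ⟨by omega⟩
  classical
  set P : (Fin (k+1) → ZMod d) → Prop := fun x => fibIsVertex d (k+1) x ∧
    ∀ h : 0 < k+1, x ⟨k+1-1, Nat.sub_lt h Nat.one_pos⟩ = j with hP
  set Q : (Fin (k+1) → ZMod d) → Prop :=
    fun x => x ⟨k-1, by omega⟩ = 0 with hQ
  have hdec : Nat.card {x // P x} = Nat.card {x // P x ∧ Q x} + Nat.card {x // P x ∧ ¬ Q x} := by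
    rw [← Nat.card_sum]
    apply Nat.card_congr
    exact (((Equiv.subtypeSubtypeEquivSubtypeInter P Q).symm.sumCongr
      (Equiv.subtypeSubtypeEquivSubtypeInter P (fun x => ¬ Q x)).symm).trans
      (Equiv.sumCompl fun z : {x // P x} => Q z.1)).symm
  have hlastk : ∀ x : Fin (k+1) → ZMod d, P x → x (Fin.last k) = j := by
    intro x hx
    exact hx.2 (Nat.succ_pos k)
  -- E0
  have E0 : {x // P x ∧ Q x} ≃ {y : Fin k → ZMod d // fibIsVertex d k y ∧
      ∀ h : 0 < k, y ⟨k-1, Nat.sub_lt h Nat.one_pos⟩ = 0} := by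
    refine ⟨fun x => ⟨Fin.init x.1, init_isVertex x.1 x.2.1.1, fun _ => x.2.2⟩,
      fun y => ⟨Fin.snoc y.1 j, ⟨?_, ?_⟩, ?_⟩, fun x => ?_, fun y => ?_⟩
    · exact (vertex_snoc hk0 y.1 j).mpr ⟨y.2.1, fun hne => absurd (y.2.2 hk0) hne⟩
    · intro _
      exact snoc_last' y.1 j (Nat.lt_succ_self k)
    · show (Fin.snoc y.1 j : Fin (k+1) → ZMod d) ⟨k-1, _⟩ = 0
      rw [snoc_lt y.1 j (k-1) (Nat.sub_lt hk0 Nat.one_pos)]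
      exact y.2.2 hk0
    · apply Subtype.ext
      show Fin.snoc (Fin.init x.1) j = x.1
      rw [← hlastk x.1 x.2.1, Fin.snoc_init_self]
    · apply Subtype.ext
      simp
  -- E1
  have E1 : {x // P x ∧ ¬ Q x} ≃ {y : Fin k → ZMod d // (fibIsVertex d k y ∧
      ∀ h : 0 < k, y ⟨k-1, Nat.sub_lt h Nat.one_pos⟩ = j - 1) ∧ j - 1 ≠ 0} := by
    have key : ∀ x : Fin (k+1) → ZMod d, P x → ¬ Q x →
        x ⟨k-1, by omega⟩ = j - 1 ∧ j - 1 ≠ 0 := by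
      intro x hx hq
      have h1 : (k-1) + 1 < k + 1 := by omega
      have := hx.1 (k-1) h1 hq
      have e : (⟨k-1+1, h1⟩ : Fin (k+1)) = ⟨k+1-1, Nat.sub_lt (Nat.succ_pos k) Nat.one_pos⟩ := by
        ext; simp; omega
      rw [e, hx.2 (Nat.succ_pos k)] at this
      have h2 : x ⟨k-1, by omega⟩ = j - 1 := by rw [this]; ring
      exact ⟨h2, h2 ▸ hq⟩
    refine ⟨fun x => ⟨Fin.init x.1, ⟨init_isVertex x.1 x.2.1.1,
        fun _ => (key x.1 x.2.1 x.2.2).1⟩, (key x.1 x.2.1 x.2.2).2⟩,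
      fun y => ⟨Fin.snoc y.1 j, ⟨?_, ?_⟩, ?_⟩, fun x => ?_, fun y => ?_⟩
    · refine (vertex_snoc hk0 y.1 j).mpr ⟨y.2.1.1, fun _ => ?_⟩
      rw [y.2.1.2 hk0, sub_add_cancel]
    · intro _
      exact snoc_last' y.1 j (Nat.lt_succ_self k)
    · show ¬ (Fin.snoc y.1 j : Fin (k+1) → ZMod d) ⟨k-1, _⟩ = 0
      rw [snoc_lt y.1 j (k-1) (Nat.sub_lt hk0 Nat.one_pos), y.2.1.2 hk0]
      exact y.2.2
    · apply Subtype.ext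
      show Fin.snoc (Fin.init x.1) j = x.1
      rw [← hlastk x.1 x.2.1, Fin.snoc_init_self]
    · apply Subtype.ext
      simp
  have h0 : fibNj d (k+1) j = Nat.card {x // P x} := rfl
  rw [h0, hdec, Nat.card_congr E0, Nat.card_congr E1]
  congr 1
  by_cases hj : j - 1 = 0
  · rw [if_pos hj]
    have : IsEmpty {y : Fin k → ZMod d // (fibIsVertex d k y ∧
        ∀ h : 0 < k, y ⟨k-1, Nat.sub_lt h Nat.one_pos⟩ = j - 1) ∧ j - 1 ≠ 0} :=
      ⟨fun y => y.2.2 hj⟩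
    exact Nat.card_of_isEmpty
  · rw [if_neg hj]
    exact Nat.card_congr (Equiv.subtypeEquivRight fun y => and_iff_left hj)

end

/-- the per-last-digit vertex counts satisfy
n_0^{k+1} = n_0^k + n_{d−1}^k, n_1^{k+1} = n_0^k, and
n_j^{k+1} = n_0^k + n_{j−1}^k for 2 ≤ j ≤ d−1 (i.e. n^{k+1} = n^k · R). -/
theorem fibNj_step (d k : ℕ) (hd : 2 ≤ d) (hk : 1 ≤ k) :
    fibNj d (k + 1) 0 = fibNj d k 0 + fibNj d k ((d - 1 : ℕ) : ZMod d) ∧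
    fibNj d (k + 1) 1 = fibNj d k 0 ∧
    ∀ j : ℕ, 2 ≤ j → j ≤ d - 1 →
      fibNj d (k + 1) (j : ZMod d) = fibNj d k 0 + fibNj d k ((j - 1 : ℕ) : ZMod d) := by
  haveI : NeZero d := ⟨by omega⟩
  haveI : Fact (1 < d) := ⟨by omega⟩
  refine ⟨?_, ?_, ?_⟩
  · rw [fibNj_succ hd hk (0 : ZMod d)]
    have h1 : ((d - 1 : ℕ) : ZMod d) = (0 : ZMod d) - 1 := by
      rw [Nat.cast_sub (by omega : 1 ≤ d), ZMod.natCast_self d]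
      push_cast
      ring
    have h2 : (0 : ZMod d) - 1 ≠ 0 := by
      rw [zero_sub]
      exact neg_ne_zero.mpr one_ne_zero
    rw [if_neg h2, h1]
  · rw [fibNj_succ hd hk (1 : ZMod d), if_pos (sub_self 1), add_zero]
  · intro j hj2 hjd
    rw [fibNj_succ hd hk (j : ZMod d)]
    have hc : (j : ZMod d) - 1 = ((j - 1 : ℕ) : ZMod d) := by
      rw [Nat.cast_sub (by omega : 1 ≤ j)]
      push_cast
      ring
    have hne : ((j - 1 : ℕ) : ZMod d) ≠ 0 := by
      rw [Ne, ZMod.natCast_eq_zero_iff]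
      intro hdvd
      have := Nat.le_of_dvd (by omega) hdvd
      omega
    rw [hc, if_neg hne]
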